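/- Let n ≥ 6 and let 𝒮₀ be a primitive nonpowerful signed digraph whose underlying digraph is F, in which all cycles of length n−1 have the same sign and all cycles of length n−2 have the same sign. Then l_{𝒮₀}(k) = l_{𝒮₀}(v_k) = 2n²−8n+9+k for 1 ≤ k ≤ n−2, and l_{𝒮₀}(k) = l_{𝒮₀}(v_k) = 2n²−8n+8+k for n−1 ≤ k ≤ n. -/

import Mathlib

/-- `f : ℕ → V` traces a directed walk of length `t` in the digraph with
adjacency relation `A` if consecutive vertices are joined by arcs. -/
def IsWalk {V : Type*} (A : V → V → Prop) (t : ℕ) (f : ℕ → V) : Prop :=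
  ∀ i < t, A (f i) (f (i + 1))

/-- There is a directed walk of length `t` from `u` to `v`. -/
def HasWalk {V : Type*} (A : V → V → Prop) (t : ℕ) (u v : V) : Prop :=
  ∃ f : ℕ → V, f 0 = u ∧ f t = v ∧ IsWalk A t f

/-- A digraph is strongly connected if every vertex can reach every vertex. -/
def StronglyConnected {V : Type*} (A : V → V → Prop) : Prop :=
  ∀ u v : V, ∃ t : ℕ, HasWalk A t u v

/-- A digraph is primitive if it is strongly connected and for some `t > 0`
there are directed walks of length `t` between every ordered pair of vertices. -/
def IsPrimitive {V : Type*} (A : V → V → Prop) : Prop :=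
  StronglyConnected A ∧ ∃ t : ℕ, 0 < t ∧ ∀ u v : V, HasWalk A t u v

/-- The local exponent at `u`: the least `l` such that for every `t ≥ l` and
every vertex `v` there is a directed walk of length `t` from `u` to `v`. -/
noncomputable def localExp {V : Type*} (A : V → V → Prop) (u : V) : ℕ :=
  sInf {l : ℕ | ∀ t ≥ l, ∀ v : V, HasWalk A t u v}

/-- `kthSmallest f k` is the `k`-th smallest element (1-indexed) of the
multiset of values of `f`. -/
noncomputable def kthSmallest {n : ℕ} (f : Fin n → ℕ) (k : ℕ) : ℕ :=
  (Multiset.sort (Finset.univ.val.map f) (· ≤ ·)).getD (k - 1) 0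

/-- A directed cycle of length `c` (a closed walk whose first `c` vertices are
pairwise distinct), given by its vertex function. -/
def IsCycle {V : Type*} (A : V → V → Prop) (c : ℕ) (f : ℕ → V) : Prop :=
  IsWalk A c f ∧ f c = f 0 ∧ ∀ i < c, ∀ j < c, f i = f j → i = j

/-- A signed digraph: each arc carries a sign `+1` or `-1`. -/
structure SignedDigraph (V : Type*) where
  Adj : V → V → Prop
  sgn : V → V → ℤ
  sgn_unit : ∀ u v : V, Adj u v → sgn u v = 1 ∨ sgn u v = -1

namespace SignedDigraph

variable {V : Type*} (S : SignedDigraph V)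

/-- The sign of the walk of length `t` traced by `f`. -/
def walkSign (t : ℕ) (f : ℕ → V) : ℤ :=
  ∏ i ∈ Finset.range t, S.sgn (f i) (f (i + 1))

/-- There is a pair of SSSD walks of length `t` from `u` to `v`: two walks with
the same endpoints and the same length but different signs. -/
def HasSSSD (t : ℕ) (u v : V) : Prop :=
  ∃ f g : ℕ → V,
    (f 0 = u ∧ f t = v ∧ IsWalk S.Adj t f) ∧
    (g 0 = u ∧ g t = v ∧ IsWalk S.Adj t g) ∧
    S.walkSign t f ≠ S.walkSign t g

/-- A signed digraph is primitive and nonpowerful if from some length on there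
are SSSD walk pairs between all ordered pairs of vertices. -/
def IsPrimitiveNonpowerful : Prop :=
  ∃ l : ℕ, 0 < l ∧ ∀ t ≥ l, ∀ u v : V, S.HasSSSD t u v

/-- The local base at vertex `u`: the least `l` such that for every `t ≥ l` and
every vertex `v` there is a pair of SSSD walks of length `t` from `u` to `v`. -/
noncomputable def localBase (u : V) : ℕ :=
  sInf {l : ℕ | ∀ t ≥ l, ∀ v : V, S.HasSSSD t u v}

/-- All directed cycles of length `c` in `S` have the same sign. -/
def SameSignCycles (c : ℕ) : Prop :=
  ∀ f g : ℕ → V, IsCycle S.Adj c f → IsCycle S.Adj c g →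
    S.walkSign c f = S.walkSign c g

end SignedDigraph

/-- Isomorphism of digraphs. -/
def DigraphIso {V W : Type*} (A : V → V → Prop) (B : W → W → Prop) : Prop :=
  ∃ e : V ≃ W, ∀ u v : V, A u v ↔ B (e u) (e v)

/-- The Hamilton cycle `Cₙ` on `v₁,…,vₙ` (here `vⱼ` is the vertex with 0-based
index `j-1`), with arcs `v₁ → vₙ` and `vⱼ → v_{j-1}` for `2 ≤ j ≤ n`. -/
def CnAdj (n : ℕ) : Fin n → Fin n → Prop := fun a b =>
  (a.val = 0 ∧ b.val = n - 1) ∨ a.val = b.val + 1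

/-- The digraph `D_{k,i}`: the Hamilton cycle `Cₙ` together with the arcs
`vⱼ → v_{n-k+j-1}` for `1 ≤ j ≤ i`. -/
def DkiAdj (n k i : ℕ) : Fin n → Fin n → Prop := fun a b =>
  CnAdj n a b ∨ ∃ j : ℕ, 1 ≤ j ∧ j ≤ i ∧ a.val = j - 1 ∧ b.val = n - k + j - 2

/-- The digraph `𝓛`: `Cₙ` together with the arcs `v₁ → v_{n-2}` and `v₃ → vₙ`. -/
def LAdj (n : ℕ) : Fin n → Fin n → Prop := fun a b =>
  CnAdj n a b ∨ (a.val = 0 ∧ b.val = n - 3) ∨ (a.val = 2 ∧ b.val = n - 1)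

/-- The digraph `F`: the `(n-1)`-cycle `v₁ → vₙ → v_{n-1} → v_{n-3} → ⋯ → v₂ → v₁`
together with the arcs `v₁ → v_{n-2}` and `v_{n-2} → v_{n-3}`. -/
def FAdj (n : ℕ) : Fin n → Fin n → Prop := fun a b =>
  (a.val = 0 ∧ b.val = n - 1) ∨ (a.val = n - 1 ∧ b.val = n - 2) ∨
  (a.val = n - 2 ∧ b.val = n - 4) ∨ (a.val = b.val + 1 ∧ 1 ≤ a.val ∧ a.val ≤ n - 4) ∨
  (a.val = 0 ∧ b.val = n - 3) ∨ (a.val = n - 3 ∧ b.val = n - 4)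

/-- The digraph `F₁`: the `(n-1)`-cycle `v₁ → v_{n-1} → v_{n-2} → ⋯ → v₂ → v₁`
together with the arcs `v₁ → v_{n-2}`, `v₂ → vₙ` and `vₙ → v_{n-1}`. -/
def F1Adj (n : ℕ) : Fin n → Fin n → Prop := fun a b =>
  (a.val = 0 ∧ b.val = n - 2) ∨ (a.val = b.val + 1 ∧ 1 ≤ a.val ∧ a.val ≤ n - 2) ∨
  (a.val = 0 ∧ b.val = n - 3) ∨ (a.val = 1 ∧ b.val = n - 1) ∨ (a.val = n - 1 ∧ b.val = n - 2)

/-- The digraph `F₂`: the `(n-1)`-cycle `v₁ → vₙ → v_{n-2} → v_{n-3} → ⋯ → v₂ → v₁`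
together with the arcs `v₁ → v_{n-2}`, `vₙ → v_{n-1}` and `v_{n-1} → v_{n-3}`. -/
def F2Adj (n : ℕ) : Fin n → Fin n → Prop := fun a b =>
  (a.val = 0 ∧ b.val = n - 1) ∨ (a.val = n - 1 ∧ b.val = n - 3) ∨
  (a.val = b.val + 1 ∧ 1 ≤ a.val ∧ a.val ≤ n - 3) ∨
  (a.val = 0 ∧ b.val = n - 3) ∨ (a.val = n - 1 ∧ b.val = n - 2) ∨ (a.val = n - 2 ∧ b.val = n - 4)

/-- The digraph `F₃`: the `(n-2)`-cycle `v₁ → v_{n-2} → v_{n-3} → ⋯ → v₂ → v₁`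
together with the arcs `v₁ → v_{n-1}`, `v_{n-1} → v_{n-2}`, `v₁ → vₙ` and `vₙ → v_{n-2}`. -/
def F3Adj (n : ℕ) : Fin n → Fin n → Prop := fun a b =>
  (a.val = 0 ∧ b.val = n - 3) ∨ (a.val = b.val + 1 ∧ 1 ≤ a.val ∧ a.val ≤ n - 3) ∨
  (a.val = 0 ∧ b.val = n - 2) ∨ (a.val = n - 2 ∧ b.val = n - 3) ∨
  (a.val = 0 ∧ b.val = n - 1) ∨ (a.val = n - 1 ∧ b.val = n - 3)

/-- The digraph `F₇`: the `(n-1)`-cycle `v₁ → v_{n-1} → v_{n-2} → ⋯ → v₂ → v₁`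
together with the arcs `v₁ → v_{n-2}`, `v₃ → vₙ` and `vₙ → v_{n-1}`. -/
def F7Adj (n : ℕ) : Fin n → Fin n → Prop := fun a b =>
  (a.val = 0 ∧ b.val = n - 2) ∨ (a.val = b.val + 1 ∧ 1 ≤ a.val ∧ a.val ≤ n - 2) ∨
  (a.val = 0 ∧ b.val = n - 3) ∨ (a.val = 2 ∧ b.val = n - 1) ∨ (a.val = n - 1 ∧ b.val = n - 2)

/-- The digraph `F'ᵢ` (for `2 ≤ i ≤ n-3`): the `(n-1)`-cycle
`v₁ → v_{n-1} → v_{n-2} → ⋯ → v₂ → v₁` together with the arcs `v₁ → v_{n-2}`,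
`v_{i+1} → vₙ` and `vₙ → v_{i-1}`. -/
def FpAdj (n i : ℕ) : Fin n → Fin n → Prop := fun a b =>
  (a.val = 0 ∧ b.val = n - 2) ∨ (a.val = b.val + 1 ∧ 1 ≤ a.val ∧ a.val ≤ n - 2) ∨
  (a.val = 0 ∧ b.val = n - 3) ∨ (a.val = i ∧ b.val = n - 1) ∨ (a.val = n - 1 ∧ b.val = i - 2)

/-- The digraph `𝓑₁`: `Cₙ` together with the arcs `v₁ → v_{n-3}` and `v₃ → v_{n-1}`. -/
def B1Adj (n : ℕ) : Fin n → Fin n → Prop := fun a b =>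
  CnAdj n a b ∨ (a.val = 0 ∧ b.val = n - 4) ∨ (a.val = 2 ∧ b.val = n - 2)

/-- The digraph `𝓑₂`: `Cₙ` together with the arcs `v₁ → v_{n-3}` and `v₄ → vₙ`. -/
def B2Adj (n : ℕ) : Fin n → Fin n → Prop := fun a b =>
  CnAdj n a b ∨ (a.val = 0 ∧ b.val = n - 4) ∨ (a.val = 3 ∧ b.val = n - 1)

/-- The digraph `𝓑₃`: `Cₙ` together with the arcs `v₁ → v_{n-3}`, `v₂ → v_{n-2}`
and `v₄ → vₙ`. -/
def B3Adj (n : ℕ) : Fin n → Fin n → Prop := fun a b =>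
  CnAdj n a b ∨ (a.val = 0 ∧ b.val = n - 4) ∨ (a.val = 1 ∧ b.val = n - 3) ∨
  (a.val = 3 ∧ b.val = n - 1)

/-- The digraph `𝓑₄`: `Cₙ` together with the arcs `v₁ → v_{n-3}`, `v₃ → v_{n-1}`
and `v₄ → vₙ`. -/
def B4Adj (n : ℕ) : Fin n → Fin n → Prop := fun a b =>
  CnAdj n a b ∨ (a.val = 0 ∧ b.val = n - 4) ∨ (a.val = 2 ∧ b.val = n - 2) ∨
  (a.val = 3 ∧ b.val = n - 1)

namespace Stmt4

variable {n : ℕ}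

def vt (hn : 6 ≤ n) (k : ℕ) : Fin n := ⟨k % n, Nat.mod_lt _ (by omega)⟩

lemma vt_val (hn : 6 ≤ n) {k : ℕ} (h : k < n) : (vt hn k).val = k := Nat.mod_eq_of_lt h

lemma vt_eq (hn : 6 ≤ n) {k : ℕ} (h : k < n) {a : Fin n} (ha : a.val = k) : a = vt hn k :=
  Fin.ext (by rw [vt_val hn h, ha])


-- units
def U (x : ℤ) : Prop := x = 1 ∨ x = -1

lemma U.mul {a b : ℤ} (ha : U a) (hb : U b) : U (a*b) := by
  rcases ha with h|h <;> rcases hb with h'|h' <;> simp [U, h, h']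

lemma U.sq {a : ℤ} (ha : U a) : a * a = 1 := by rcases ha with h|h <;> simp [h]

lemma U.ne0 {a : ℤ} (ha : U a) : a ≠ 0 := by rcases ha with h|h <;> simp [h]

variable (S : SignedDigraph (Fin n))

def G (hn : 6 ≤ n) : ℕ → ℤ
  | 0 => 1
  | k+1 => S.sgn (vt hn (k+1)) (vt hn k) * G hn k

def gg (hn : 6 ≤ n) (v : Fin n) : ℤ :=
  if v.val = n-1 then
    S.sgn (vt hn (n-1)) (vt hn (n-2)) * (S.sgn (vt hn (n-2)) (vt hn (n-4)) * G S hn (n-4))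
  else if v.val = n-2 then S.sgn (vt hn (n-2)) (vt hn (n-4)) * G S hn (n-4)
  else if v.val = n-3 then S.sgn (vt hn (n-3)) (vt hn (n-4)) * G S hn (n-4)
  else G S hn v.val

def hgt (n : ℕ) (v : Fin n) : ℕ :=
  if v.val = n-1 then n-2 else if v.val = n-2 then n-3 else v.val

def sg1 (hn : 6 ≤ n) : ℤ := S.sgn (vt hn 0) (vt hn (n-1)) * gg S hn (vt hn (n-1))
def sg2 (hn : 6 ≤ n) : ℤ := S.sgn (vt hn 0) (vt hn (n-3)) * gg S hn (vt hn (n-3))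

def NN (hn : 6 ≤ n) (f : ℕ → Fin n) (t : ℕ) : ℕ :=
  ((Finset.range t).filter (fun i => f i = vt hn 0 ∧ f (i+1) = vt hn (n-1))).card
def MM (hn : 6 ≤ n) (f : ℕ → Fin n) (t : ℕ) : ℕ :=
  ((Finset.range t).filter (fun i => f i = vt hn 0 ∧ f (i+1) = vt hn (n-3))).card

-- simp-style value lemmas
lemma hgt_val (hn : 6 ≤ n) {k : ℕ} (h : k ≤ n-3) : hgt n (vt hn k) = k := by
  unfold hgt; rw [vt_val hn (by omega), if_neg (by omega), if_neg (by omega)]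

lemma hgt_of (hn : 6 ≤ n) {v : Fin n} (h : v.val ≤ n-3) : hgt n v = v.val := by
  unfold hgt; rw [if_neg (by omega), if_neg (by omega)]

lemma hgt_n2 (hn : 6 ≤ n) : hgt n (vt hn (n-2)) = n-3 := by
  unfold hgt; rw [vt_val hn (by omega), if_neg (by omega), if_pos rfl]

lemma hgt_n1 (hn : 6 ≤ n) : hgt n (vt hn (n-1)) = n-2 := by
  unfold hgt; rw [vt_val hn (by omega), if_pos rfl]

lemma gg_le (hn : 6 ≤ n) {v : Fin n} (h : v.val ≤ n-4) : gg S hn v = G S hn v.val := by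
  unfold gg; rw [if_neg (by omega), if_neg (by omega), if_neg (by omega)]

lemma gg_0 (hn : 6 ≤ n) : gg S hn (vt hn 0) = 1 := by
  rw [gg_le S hn (by rw [vt_val hn (by omega)]; omega), vt_val hn (by omega)]; rfl

lemma gg_n3 (hn : 6 ≤ n) :
    gg S hn (vt hn (n-3)) = S.sgn (vt hn (n-3)) (vt hn (n-4)) * G S hn (n-4) := by
  unfold gg; rw [vt_val hn (by omega), if_neg (by omega), if_neg (by omega), if_pos rfl]

lemma gg_n2 (hn : 6 ≤ n) :
    gg S hn (vt hn (n-2)) = S.sgn (vt hn (n-2)) (vt hn (n-4)) * G S hn (n-4) := by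
  unfold gg; rw [vt_val hn (by omega), if_neg (by omega), if_pos rfl]

lemma gg_n1 (hn : 6 ≤ n) :
    gg S hn (vt hn (n-1)) =
      S.sgn (vt hn (n-1)) (vt hn (n-2)) * (S.sgn (vt hn (n-2)) (vt hn (n-4)) * G S hn (n-4)) := by
  unfold gg; rw [vt_val hn (by omega), if_pos rfl]


section Arcs
variable (hn : 6 ≤ n) (hadj : S.Adj = FAdj n)
include hadj

lemma arc_chain {k : ℕ} (h2 : k+1 ≤ n-4) : S.Adj (vt hn (k+1)) (vt hn k) := by
  rw [hadj]
  exact Or.inr (Or.inr (Or.inr (Or.inl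
    ⟨by rw [vt_val hn (by omega), vt_val hn (by omega)],
     by rw [vt_val hn (by omega)]; omega, by rw [vt_val hn (by omega)]; omega⟩)))

lemma arc_0n1 : S.Adj (vt hn 0) (vt hn (n-1)) := by
  rw [hadj]; exact Or.inl ⟨vt_val hn (by omega), vt_val hn (by omega)⟩

lemma arc_n1n2 : S.Adj (vt hn (n-1)) (vt hn (n-2)) := by
  rw [hadj]; exact Or.inr (Or.inl ⟨vt_val hn (by omega), vt_val hn (by omega)⟩)

lemma arc_n2n4 : S.Adj (vt hn (n-2)) (vt hn (n-4)) := by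
  rw [hadj]; exact Or.inr (Or.inr (Or.inl ⟨vt_val hn (by omega), vt_val hn (by omega)⟩))

lemma arc_0n3 : S.Adj (vt hn 0) (vt hn (n-3)) := by
  rw [hadj]
  exact Or.inr (Or.inr (Or.inr (Or.inr (Or.inl ⟨vt_val hn (by omega), vt_val hn (by omega)⟩))))

lemma arc_n3n4 : S.Adj (vt hn (n-3)) (vt hn (n-4)) := by
  rw [hadj]
  exact Or.inr (Or.inr (Or.inr (Or.inr (Or.inr ⟨vt_val hn (by omega), vt_val hn (by omega)⟩))))


lemma unit_G : ∀ k, k ≤ n-4 → U (G S hn k) := by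
  intro k
  induction k with
  | zero => intro _; exact Or.inl rfl
  | succ k IH =>
    intro hk
    exact U.mul (S.sgn_unit _ _ (arc_chain S hn hadj hk)) (IH (by omega))

lemma unit_gg (v : Fin n) : U (gg S hn v) := by
  have h4 := unit_G S hn hadj (n-4) (le_refl _)
  by_cases h1 : v.val = n-1
  · rw [vt_eq hn (by omega) h1, gg_n1]
    exact U.mul (S.sgn_unit _ _ (arc_n1n2 S hn hadj))
      (U.mul (S.sgn_unit _ _ (arc_n2n4 S hn hadj)) h4)
  by_cases h2 : v.val = n-2
  · rw [vt_eq hn (by omega) h2, gg_n2]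
    exact U.mul (S.sgn_unit _ _ (arc_n2n4 S hn hadj)) h4
  by_cases h3 : v.val = n-3
  · rw [vt_eq hn (by omega) h3, gg_n3]
    exact U.mul (S.sgn_unit _ _ (arc_n3n4 S hn hadj)) h4
  · have hv : v.val ≤ n-4 := by have := v.isLt; omega
    rw [gg_le S hn hv]
    exact unit_G S hn hadj _ hv

lemma unit_sg1 : U (sg1 S hn) :=
  U.mul (S.sgn_unit _ _ (arc_0n1 S hn hadj)) (unit_gg S hn hadj _)

lemma unit_sg2 : U (sg2 S hn) :=
  U.mul (S.sgn_unit _ _ (arc_0n3 S hn hadj)) (unit_gg S hn hadj _)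

end Arcs


section Invariant
variable (hn : 6 ≤ n) (hadj : S.Adj = FAdj n)
include hn hadj

lemma step_ne {a b : Fin n} (h : FAdj n a b) (ha : a.val ≠ 0) :
    hgt n a = hgt n b + 1 ∧ S.sgn a b * gg S hn b = gg S hn a := by
  have hal := a.isLt
  have hbl := b.isLt
  rcases h with ⟨h1,h2⟩|⟨h1,h2⟩|⟨h1,h2⟩|⟨h1,h2,h3⟩|⟨h1,h2⟩|⟨h1,h2⟩
  · omega
  · -- n-1 → n-2
    rw [vt_eq hn (by omega) h1, vt_eq hn (by omega) h2]
    constructor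
    · rw [hgt_n1 hn, hgt_n2 hn]; omega
    · rw [gg_n2, gg_n1]
  · -- n-2 → n-4
    rw [vt_eq hn (by omega) h1, vt_eq hn (by omega) h2]
    constructor
    · rw [hgt_n2 hn, hgt_val hn (by omega)]; omega
    · rw [gg_n2, gg_le S hn (by rw [vt_val hn (by omega)])]
      rw [vt_val hn (by omega)]
  · -- chain a = b+1, 1 ≤ a ≤ n-4
    have hb4 : b.val ≤ n-4 := by omega
    constructor
    · rw [hgt_of hn (by omega), hgt_of hn (by omega)]; omega
    · have ha' : a = vt hn (b.val+1) := vt_eq hn (by omega) h1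
      have hb' : b = vt hn b.val := vt_eq hn b.isLt rfl
      have e : S.sgn a b = S.sgn (vt hn (b.val+1)) (vt hn b.val) := by rw [← ha', ← hb']
      rw [gg_le S hn (v := a) (by omega), gg_le S hn (v := b) hb4, e, h1]
      show S.sgn (vt hn (b.val+1)) (vt hn b.val) * G S hn b.val = G S hn (b.val+1)
      rfl
  · omega
  · -- n-3 → n-4
    rw [vt_eq hn (by omega) h1, vt_eq hn (by omega) h2]
    constructor
    · rw [hgt_val hn (by omega), hgt_val hn (by omega)]; omega
    · rw [gg_n3, gg_le S hn (by rw [vt_val hn (by omega)]), vt_val hn (by omega)]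

omit hadj in
lemma step_zero {a b : Fin n} (h : FAdj n a b) (ha : a.val = 0) :
    b = vt hn (n-1) ∨ b = vt hn (n-3) := by
  have hal := a.isLt
  have hbl := b.isLt
  rcases h with ⟨h1,h2⟩|⟨h1,h2⟩|⟨h1,h2⟩|⟨h1,h2,h3⟩|⟨h1,h2⟩|⟨h1,h2⟩
  · exact Or.inl (vt_eq hn (by omega) h2)
  · omega
  · omega
  · omega
  · exact Or.inr (vt_eq hn (by omega) h2)
  · omega

omit hn hadj in
lemma count_step (P : ℕ → Fin n × Fin n) (Q : Fin n × Fin n → Prop) [DecidablePred Q] (t : ℕ) :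
    ((Finset.range (t+1)).filter (fun i => Q (P i))).card =
    ((Finset.range t).filter (fun i => Q (P i))).card + (if Q (P t) then 1 else 0) := by
  rw [Finset.range_add_one, Finset.filter_insert]
  split
  · rw [Finset.card_insert_of_notMem (by simp)]
  · simp

lemma invar (f : ℕ → Fin n) : ∀ t, IsWalk S.Adj t f →
    (t + hgt n (f t) = hgt n (f 0) + NN hn f t * (n-1) + MM hn f t * (n-2)) ∧
    S.walkSign t f * gg S hn (f t) = gg S hn (f 0) * sg1 S hn ^ (NN hn f t) * sg2 S hn ^ (MM hn f t) := by
  intro t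
  induction t with
  | zero =>
    intro _
    constructor
    · simp [NN, MM]
    · simp [NN, MM, SignedDigraph.walkSign]
  | succ t IH =>
    intro hw
    have hw' : IsWalk S.Adj t f := fun i hi => hw i (by omega)
    obtain ⟨Ih, Is⟩ := IH hw'
    have harc : S.Adj (f t) (f (t+1)) := hw t (by omega)
    have harcF : FAdj n (f t) (f (t+1)) := by rw [hadj] at harc; exact harc
    have hsign : S.walkSign (t+1) f = S.walkSign t f * S.sgn (f t) (f (t+1)) :=
      Finset.prod_range_succ _ _
    have hNN : NN hn f (t+1) = NN hn f t +
        (if (f t = vt hn 0 ∧ f (t+1) = vt hn (n-1)) then 1 else 0) := by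
      unfold NN
      rw [Finset.range_add_one, Finset.filter_insert]
      split
      · rw [Finset.card_insert_of_notMem (by simp)]
      · simp
    have hMM : MM hn f (t+1) = MM hn f t +
        (if (f t = vt hn 0 ∧ f (t+1) = vt hn (n-3)) then 1 else 0) := by
      unfold MM
      rw [Finset.range_add_one, Finset.filter_insert]
      split
      · rw [Finset.card_insert_of_notMem (by simp)]
      · simp
    by_cases h0 : (f t).val = 0
    · have hf0 : f t = vt hn 0 := vt_eq hn (by omega) h0
      have hgt_ft : hgt n (f t) = 0 := by rw [hf0, hgt_val hn (by omega)]
      have hgg_ft : gg S hn (f t) = 1 := by rw [hf0, gg_0]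
      rcases step_zero hn harcF h0 with hb | hb
      · -- long step
        have hcond : (f t = vt hn 0 ∧ f (t+1) = vt hn (n-1)) := ⟨hf0, hb⟩
        have hncond : ¬ (f t = vt hn 0 ∧ f (t+1) = vt hn (n-3)) := by
          rintro ⟨-, hb'⟩
          rw [hb'] at hb
          have := congrArg Fin.val hb
          rw [vt_val hn (by omega), vt_val hn (by omega)] at this
          omega
        rw [hNN, if_pos hcond, hMM, if_neg hncond, add_zero]
        constructor
        · rw [hb, hgt_n1 hn]
          rw [hgt_ft] at Ih
          have e : (NN hn f t + 1) * (n-1) = NN hn f t * (n-1) + (n-1) := by ring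
          omega
        · rw [hsign, hb]
          have hstep : S.sgn (f t) (vt hn (n-1)) * gg S hn (vt hn (n-1)) = sg1 S hn := by
            rw [hf0]; rfl
          rw [hgg_ft, mul_one] at Is
          rw [mul_assoc, hstep, Is, pow_succ]
          ring
      · -- short step
        have hcond : (f t = vt hn 0 ∧ f (t+1) = vt hn (n-3)) := ⟨hf0, hb⟩
        have hncond : ¬ (f t = vt hn 0 ∧ f (t+1) = vt hn (n-1)) := by
          rintro ⟨-, hb'⟩
          rw [hb'] at hb
          have := congrArg Fin.val hb
          rw [vt_val hn (by omega), vt_val hn (by omega)] at this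
          omega
        rw [hNN, if_neg hncond, hMM, if_pos hcond, add_zero]
        constructor
        · rw [hb, hgt_val hn (by omega)]
          rw [hgt_ft] at Ih
          have e : (MM hn f t + 1) * (n-2) = MM hn f t * (n-2) + (n-2) := by ring
          omega
        · rw [hsign, hb]
          have hstep : S.sgn (f t) (vt hn (n-3)) * gg S hn (vt hn (n-3)) = sg2 S hn := by
            rw [hf0]; rfl
          rw [hgg_ft, mul_one] at Is
          rw [mul_assoc, hstep, Is, pow_succ]
          ring
    · -- nonzero step
      have hncond1 : ¬ (f t = vt hn 0 ∧ f (t+1) = vt hn (n-1)) := by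
        rintro ⟨h', -⟩
        exact h0 (by rw [h']; exact vt_val hn (by omega))
      have hncond2 : ¬ (f t = vt hn 0 ∧ f (t+1) = vt hn (n-3)) := by
        rintro ⟨h', -⟩
        exact h0 (by rw [h']; exact vt_val hn (by omega))
      rw [hNN, if_neg hncond1, hMM, if_neg hncond2, add_zero, add_zero]
      obtain ⟨hh, hs⟩ := step_ne S hn hadj harcF h0
      constructor
      · omega
      · rw [hsign, mul_assoc, hs]
        exact Is

end Invariant

section Walks
variable (hn : 6 ≤ n) (hadj : S.Adj = FAdj n)

def Wk (t : ℕ) (u v : Fin n) (s : ℤ) : Prop :=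
  ∃ f : ℕ → Fin n, f 0 = u ∧ f t = v ∧ IsWalk S.Adj t f ∧ S.walkSign t f = s

lemma Wk.zero {u : Fin n} {s : ℤ} (hs : s = 1) : Wk S 0 u u s :=
  ⟨fun _ => u, rfl, rfl, fun i hi => absurd hi (by omega),
   by simp [SignedDigraph.walkSign, hs]⟩

lemma Wk.single {u v : Fin n} {s : ℤ} (h : S.Adj u v) (hs : S.sgn u v = s) : Wk S 1 u v s := by
  refine ⟨fun i => if i = 0 then u else v, by simp, by simp, ?_, ?_⟩
  · intro i hi
    have : i = 0 := by omega
    subst this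
    simpa using h
  · simp [SignedDigraph.walkSign, hs]

lemma Wk.comp {t₁ t₂ t : ℕ} {u v w : Fin n} {s₁ s₂ s : ℤ}
    (h₁ : Wk S t₁ u v s₁) (h₂ : Wk S t₂ v w s₂) (ht : t = t₁ + t₂) (hs : s = s₁ * s₂) :
    Wk S t u w s := by
  obtain ⟨f, hf0, hft, hfw, hfs⟩ := h₁
  obtain ⟨g, hg0, hgt2, hgw, hgs⟩ := h₂
  subst ht hs
  refine ⟨fun i => if i < t₁ then f i else g (i - t₁), ?_, ?_, ?_, ?_⟩
  · by_cases h : 0 < t₁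
    · simpa [h] using hf0
    · have ht1 : t₁ = 0 := by omega
      simp only [h, if_false]
      rw [ht1] at hft
      simp [← hft, ← hf0, hg0]
  · have h : ¬ (t₁ + t₂ < t₁) := by omega
    simp only [h, if_false]
    simpa using hgt2
  · intro i hi
    by_cases h : i < t₁
    · by_cases h' : i + 1 < t₁
      · simpa [h, h'] using hfw i h
      · have e : i + 1 = t₁ := by omega
        have e2 : (if i < t₁ then f i else g (i - t₁)) = f i := by simp [h]
        have e3 : (if i+1 < t₁ then f (i+1) else g (i+1 - t₁)) = f (i+1) := by
          rw [if_neg h', e, Nat.sub_self, hg0, ← hft]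
        show S.Adj (if i < t₁ then f i else g (i - t₁)) (if i+1 < t₁ then f (i+1) else g (i+1 - t₁))
        rw [e2, e3]
        exact hfw i h
    · have h' : ¬ (i + 1 < t₁) := by omega
      simp only [h, h', if_false]
      have : i + 1 - t₁ = (i - t₁) + 1 := by omega
      rw [this]
      exact hgw (i - t₁) (by omega)
  · unfold SignedDigraph.walkSign
    rw [Finset.prod_range_add]
    have e1 : ∀ i ∈ Finset.range t₁,
        S.sgn (if i < t₁ then f i else g (i - t₁)) (if i+1 < t₁ then f (i+1) else g (i+1 - t₁))
        = S.sgn (f i) (f (i+1)) := by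
      intro i hi
      have hi' : i < t₁ := Finset.mem_range.mp hi
      by_cases h' : i + 1 < t₁
      · simp [hi', h']
      · have e : i + 1 = t₁ := by omega
        have e3 : (if i+1 < t₁ then f (i+1) else g (i+1 - t₁)) = f (i+1) := by
          rw [if_neg h', e, Nat.sub_self, hg0, ← hft]
        rw [if_pos hi', e3]
    have e2 : ∀ i ∈ Finset.range t₂,
        S.sgn (if t₁ + i < t₁ then f (t₁+i) else g (t₁ + i - t₁))
          (if t₁ + i + 1 < t₁ then f (t₁+i+1) else g (t₁ + i + 1 - t₁))
        = S.sgn (g i) (g (i+1)) := by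
      intro i hi
      have h1 : ¬ (t₁ + i < t₁) := by omega
      have h2 : ¬ (t₁ + i + 1 < t₁) := by omega
      rw [if_neg h1, if_neg h2]
      congr 2 <;> omega
    rw [Finset.prod_congr rfl e1, Finset.prod_congr rfl e2, ← hfs, ← hgs]
    rfl

end Walks

section Build
variable (hn : 6 ≤ n) (hadj : S.Adj = FAdj n)
include hn hadj

lemma WdescP : ∀ k, k ≤ n-4 → ∀ v, v ≤ k →
    Wk S (k - v) (vt hn k) (vt hn v) (G S hn k * G S hn v) := by
  intro k
  induction k with
  | zero =>
    intro _ v hv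
    have : v = 0 := by omega
    subst this
    exact Wk.zero S (by show G S hn 0 * G S hn 0 = 1; rfl)
  | succ k IH =>
    intro hk v hv
    by_cases hv' : v = k+1
    · subst hv'
      rw [Nat.sub_self]
      exact Wk.zero S (U.sq (unit_G S hn hadj _ hk))
    · have hv2 : v ≤ k := by omega
      refine Wk.comp S (Wk.single S (arc_chain S hn hadj hk) rfl) (IH (by omega) v hv2)
        (by omega) ?_
      show G S hn (k+1) * G S hn v = S.sgn (vt hn (k+1)) (vt hn k) * (G S hn k * G S hn v)
      show S.sgn (vt hn (k+1)) (vt hn k) * G S hn k * G S hn v = _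
      ring


omit hadj in
lemma G_zero : G S hn 0 = 1 := rfl

lemma Wlong : Wk S (n-1) (vt hn 0) (vt hn 0) (sg1 S hn) := by
  refine Wk.comp S (Wk.single S (arc_0n1 S hn hadj) rfl)
    (Wk.comp S (Wk.single S (arc_n1n2 S hn hadj) rfl)
      (Wk.comp S (Wk.single S (arc_n2n4 S hn hadj) rfl)
        (WdescP S hn hadj (n-4) le_rfl 0 (by omega)) rfl rfl) rfl rfl)
    (by omega) ?_
  simp only [sg1, gg_n1]
  rw [G_zero, mul_one]

lemma Wshort : Wk S (n-2) (vt hn 0) (vt hn 0) (sg2 S hn) := by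
  refine Wk.comp S (Wk.single S (arc_0n3 S hn hadj) rfl)
    (Wk.comp S (Wk.single S (arc_n3n4 S hn hadj) rfl)
      (WdescP S hn hadj (n-4) le_rfl 0 (by omega)) rfl rfl)
    (by omega) ?_
  simp only [sg2, gg_n3]
  rw [G_zero, mul_one]

lemma Wpow1 : ∀ a, Wk S (a*(n-1)) (vt hn 0) (vt hn 0) (sg1 S hn ^ a) := by
  intro a
  induction a with
  | zero => rw [Nat.zero_mul]; exact Wk.zero S (pow_zero _)
  | succ a IH =>
    exact Wk.comp S (Wlong S hn hadj) IH (by ring) (by rw [pow_succ]; ring)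

lemma Wpow2 : ∀ b, Wk S (b*(n-2)) (vt hn 0) (vt hn 0) (sg2 S hn ^ b) := by
  intro b
  induction b with
  | zero => rw [Nat.zero_mul]; exact Wk.zero S (pow_zero _)
  | succ b IH =>
    exact Wk.comp S (Wshort S hn hadj) IH (by ring) (by rw [pow_succ]; ring)

lemma Wpows (a b : ℕ) :
    Wk S (a*(n-1)+b*(n-2)) (vt hn 0) (vt hn 0) (sg1 S hn ^ a * sg2 S hn ^ b) :=
  Wk.comp S (Wpow1 S hn hadj a) (Wpow2 S hn hadj b) rfl rfl

lemma WtailL (v : ℕ) (h1 : 1 ≤ v) (h2 : v ≤ n-4) :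
    Wk S (n-1-v) (vt hn 0) (vt hn v) (sg1 S hn * G S hn v) := by
  refine Wk.comp S (Wk.single S (arc_0n1 S hn hadj) rfl)
    (Wk.comp S (Wk.single S (arc_n1n2 S hn hadj) rfl)
      (Wk.comp S (Wk.single S (arc_n2n4 S hn hadj) rfl)
        (WdescP S hn hadj (n-4) le_rfl v h2) rfl rfl) rfl rfl)
    (by omega) ?_
  simp only [sg1, gg_n1]
  ring

lemma WtailS (v : ℕ) (h1 : 1 ≤ v) (h2 : v ≤ n-4) :
    Wk S (n-2-v) (vt hn 0) (vt hn v) (sg2 S hn * G S hn v) := by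
  refine Wk.comp S (Wk.single S (arc_0n3 S hn hadj) rfl)
    (Wk.comp S (Wk.single S (arc_n3n4 S hn hadj) rfl)
      (WdescP S hn hadj (n-4) le_rfl v h2) rfl rfl)
    (by omega) ?_
  simp only [sg2, gg_n3]
  ring

lemma Wtail3 : Wk S 1 (vt hn 0) (vt hn (n-3)) (sg2 S hn * gg S hn (vt hn (n-3))) := by
  refine Wk.single S (arc_0n3 S hn hadj) ?_
  have hu := U.sq (unit_gg S hn hadj (vt hn (n-3)))
  simp only [sg2]
  rw [mul_assoc, hu, mul_one]

lemma Wtail1 : Wk S 1 (vt hn 0) (vt hn (n-1)) (sg1 S hn * gg S hn (vt hn (n-1))) := by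
  refine Wk.single S (arc_0n1 S hn hadj) ?_
  have hu := U.sq (unit_gg S hn hadj (vt hn (n-1)))
  simp only [sg1]
  rw [mul_assoc, hu, mul_one]

lemma Wtail2 : Wk S 2 (vt hn 0) (vt hn (n-2)) (sg1 S hn * gg S hn (vt hn (n-2))) := by
  refine Wk.comp S (Wk.single S (arc_0n1 S hn hadj) rfl)
    (Wk.single S (arc_n1n2 S hn hadj) rfl) rfl ?_
  have hx := U.sq (U.mul (S.sgn_unit _ _ (arc_n2n4 S hn hadj)) (unit_G S hn hadj (n-4) le_rfl))
  simp only [sg1, gg_n1, gg_n2]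
  linear_combination (S.sgn (vt hn 0) (vt hn (n-1)) * S.sgn (vt hn (n-1)) (vt hn (n-2))) * hx


lemma Wto (v : Fin n) (N M len : ℕ)
    (hlen : len + hgt n v = N*(n-1) + M*(n-2))
    (hc : v.val = 0 ∨ (1 ≤ v.val ∧ v.val ≤ n-4 ∧ (1 ≤ N ∨ 1 ≤ M)) ∨
          (v.val = n-3 ∧ 1 ≤ M) ∨ (n-2 ≤ v.val ∧ 1 ≤ N)) :
    Wk S len (vt hn 0) v (sg1 S hn ^ N * sg2 S hn ^ M * gg S hn v) := by
  have hvl := v.isLt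
  rcases hc with h | ⟨h1, h2, h3⟩ | ⟨h1, h2⟩ | ⟨h1, h2⟩
  · -- v = 0
    have hv : v = vt hn 0 := vt_eq hn (by omega) h
    subst hv
    rw [hgt_val hn (by omega)] at hlen
    refine Wk.comp S (Wpows S hn hadj N M) (Wk.zero S rfl) (by omega) ?_
    rw [gg_0]
  · -- 1 ≤ v ≤ n-4
    have hv : v = vt hn v.val := vt_eq hn hvl rfl
    rw [hgt_of hn (by omega)] at hlen
    rw [gg_le S hn h2]
    rcases h3 with h3 | h3
    · obtain ⟨N', rfl⟩ : ∃ N', N = N' + 1 := ⟨N-1, by omega⟩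
      have e : (N'+1)*(n-1) = N'*(n-1) + (n-1) := by ring
      have htail := WtailL S hn hadj v.val h1 h2
      rw [← hv] at htail
      exact Wk.comp S (Wpows S hn hadj N' M) htail (by omega) (by rw [pow_succ]; ring)
    · obtain ⟨M', rfl⟩ : ∃ M', M = M' + 1 := ⟨M-1, by omega⟩
      have e : (M'+1)*(n-2) = M'*(n-2) + (n-2) := by ring
      have htail := WtailS S hn hadj v.val h1 h2
      rw [← hv] at htail
      exact Wk.comp S (Wpows S hn hadj N M') htail (by omega) (by rw [pow_succ]; ring)
  · -- v = n-3
    have hv : v = vt hn (n-3) := vt_eq hn (by omega) h1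
    subst hv
    rw [hgt_val hn (by omega)] at hlen
    obtain ⟨M', rfl⟩ : ∃ M', M = M' + 1 := ⟨M-1, by omega⟩
    have e : (M'+1)*(n-2) = M'*(n-2) + (n-2) := by ring
    exact Wk.comp S (Wpows S hn hadj N M') (Wtail3 S hn hadj) (by omega)
      (by rw [pow_succ]; ring)
  · -- v = n-2 or n-1
    obtain ⟨N', rfl⟩ : ∃ N', N = N' + 1 := ⟨N-1, by omega⟩
    have e : (N'+1)*(n-1) = N'*(n-1) + (n-1) := by ring
    by_cases hv2 : v.val = n-2
    · have hv : v = vt hn (n-2) := vt_eq hn (by omega) hv2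
      subst hv
      rw [hgt_n2 hn] at hlen
      exact Wk.comp S (Wpows S hn hadj N' M) (Wtail2 S hn hadj) (by omega)
        (by rw [pow_succ]; ring)
    · have hv1 : v.val = n-1 := by omega
      have hv : v = vt hn (n-1) := vt_eq hn (by omega) hv1
      subst hv
      rw [hgt_n1 hn] at hlen
      exact Wk.comp S (Wpows S hn hadj N' M) (Wtail1 S hn hadj) (by omega)
        (by rw [pow_succ]; ring)

lemma Wstart (u : Fin n) : Wk S (hgt n u) u (vt hn 0) (gg S hn u) := by
  have hvl := u.isLt
  by_cases h1 : u.val = n-1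
  · have hu : u = vt hn (n-1) := vt_eq hn (by omega) h1
    subst hu
    rw [hgt_n1 hn, gg_n1]
    refine Wk.comp S (Wk.single S (arc_n1n2 S hn hadj) rfl)
      (Wk.comp S (Wk.single S (arc_n2n4 S hn hadj) rfl)
        (WdescP S hn hadj (n-4) le_rfl 0 (by omega)) rfl rfl)
      (by omega) ?_
    rw [G_zero, mul_one]
  by_cases h2 : u.val = n-2
  · have hu : u = vt hn (n-2) := vt_eq hn (by omega) h2
    subst hu
    rw [hgt_n2 hn, gg_n2]
    refine Wk.comp S (Wk.single S (arc_n2n4 S hn hadj) rfl)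
      (WdescP S hn hadj (n-4) le_rfl 0 (by omega)) (by omega) ?_
    rw [G_zero, mul_one]
  by_cases h3 : u.val = n-3
  · have hu : u = vt hn (n-3) := vt_eq hn (by omega) h3
    subst hu
    rw [hgt_val hn (by omega), gg_n3]
    refine Wk.comp S (Wk.single S (arc_n3n4 S hn hadj) rfl)
      (WdescP S hn hadj (n-4) le_rfl 0 (by omega)) (by omega) ?_
    rw [G_zero, mul_one]
  · have h4 : u.val ≤ n-4 := by omega
    have hu : u = vt hn u.val := vt_eq hn hvl rfl
    rw [hgt_of hn (by omega), gg_le S hn h4]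
    have hdesc := WdescP S hn hadj u.val h4 0 (by omega)
    rw [Nat.sub_zero, G_zero, mul_one, ← hu] at hdesc
    exact hdesc


end Build

section Numbers
variable (hn : 6 ≤ n)
include hn

omit hn in
lemma rep_exists (hn : 6 ≤ n) : ∀ x, (n-2)*(n-3) ≤ x → ∃ a b, x = a*(n-1) + b*(n-2) := by
  intro x hx
  set r := x % (n-2) with hr
  set q := x / (n-2) with hq
  have hmod : (n-2) * q + r = x := Nat.div_add_mod x (n-2)
  have hrlt : r < n-2 := Nat.mod_lt _ (by omega)
  have hql : n-3 ≤ q := by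
    rw [hq, Nat.le_div_iff_mul_le (by omega : 0 < n-2)]
    calc (n-3)*(n-2) = (n-2)*(n-3) := by ring
    _ ≤ x := hx
  refine ⟨r, q - r, ?_⟩
  have hrq : r ≤ q := by omega
  have e1 : (q - r)*(n-2) + r*(n-2) = q*(n-2) := by
    rw [← Nat.add_mul]
    congr 1
    omega
  have e2 : r*(n-1) = r*(n-2) + r := by
    have : n-1 = (n-2)+1 := by omega
    rw [this, Nat.mul_add, mul_one]
  have e3 : (n-2)*q = q*(n-2) := by ring
  omega

omit hn in
lemma non_rep (hn : 6 ≤ n) : ∀ a b, a*(n-1) + b*(n-2) ≠ (n-2)*(n-3) - 1 := by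
  intro a b h
  have e : a*(n-1)+b*(n-2) = (a+b)*(n-2)+a := by
    have h1 : n-1 = (n-2)+1 := by omega
    rw [h1]; ring
  set s := a + b with hs
  by_cases hc : s ≤ n-4
  · have b1 : s*(n-2) ≤ (n-4)*(n-2) := Nat.mul_le_mul_right _ hc
    have b3 : (n-4)*(n-2) + (n-4) + 2 = (n-2)*(n-3) := by
      obtain ⟨c, rfl⟩ : ∃ c, n = c+6 := ⟨n-6, by omega⟩
      have e1 : c+6-4 = c+2 := by omega
      have e2 : c+6-2 = c+4 := by omega
      have e3 : c+6-3 = c+3 := by omega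
      rw [e1, e2, e3]; ring
    omega
  · have hc' : n-3 ≤ s := by omega
    have b1 : (n-3)*(n-2) ≤ s*(n-2) := Nat.mul_le_mul_right _ hc'
    have b2 : (n-3)*(n-2) = (n-2)*(n-3) := by ring
    have hE : 1 ≤ (n-2)*(n-3) := Nat.mul_pos (by omega) (by omega)
    omega

end Numbers

section Main
variable (hn : 6 ≤ n) (hadj : S.Adj = FAdj n)
include hn hadj

omit hadj in
lemma rep_shift {N M N' M' : ℕ} (h : N*(n-1)+M*(n-2) = N'*(n-1)+M'*(n-2)) (hlt : N < N') :
    ∃ k, 1 ≤ k ∧ N' = N + k*(n-2) ∧ M = M' + k*(n-1) := by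
  have hN1 : (N+1)*(n-1) ≤ N'*(n-1) := Nat.mul_le_mul_right _ (by omega)
  have hNe : (N+1)*(n-1) = N*(n-1) + (n-1) := by ring
  have hM'M : M'*(n-2) ≤ M*(n-2) := by omega
  have hMM : M' ≤ M := Nat.le_of_mul_le_mul_right hM'M (by omega)
  have hNN : N*(n-1) ≤ N'*(n-1) := Nat.mul_le_mul_right _ (by omega)
  have key : (N' - N)*(n-1) = (M - M')*(n-2) := by
    rw [Nat.sub_mul, Nat.sub_mul]
    omega
  have e : (N'-N)*(n-1) = (N'-N)*(n-2) + (N'-N) := by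
    rw [show n-1 = (n-2)+1 from by omega]; ring
  have h1 : (n-2) ∣ (N'-N)*(n-2) + (N'-N) := by
    rw [← e, key]; exact dvd_mul_left (n-2) (M-M')
  have h2 : (n-2) ∣ (N'-N) := (Nat.dvd_add_right (dvd_mul_left (n-2) (N'-N))).mp h1
  obtain ⟨k, hk⟩ := h2
  have hk1 : 1 ≤ k := by
    rcases Nat.eq_zero_or_pos k with h|h
    · subst h; rw [mul_zero] at hk; omega
    · exact h
  have ekn : (n-2)*k = k*(n-2) := by ring
  refine ⟨k, hk1, by omega, ?_⟩
  have e2 : (M-M')*(n-2) = (k*(n-1))*(n-2) := by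
    rw [← key, hk]; ring
  have e3 : M - M' = k*(n-1) := Nat.eq_of_mul_eq_mul_right (by omega) e2
  omega

lemma sign_shift (hs : sg1 S hn ^ (n-2) ≠ sg2 S hn ^ (n-1)) (p q : ℕ) :
    sg1 S hn ^ (p+(n-2)) * sg2 S hn ^ q ≠ sg1 S hn ^ p * sg2 S hn ^ (q+(n-1)) := by
  intro h
  apply hs
  have h1 : sg1 S hn ^ p * (sg1 S hn ^ (n-2) * sg2 S hn ^ q) =
      sg1 S hn ^ p * (sg2 S hn ^ q * sg2 S hn ^ (n-1)) := by
    rw [pow_add] at h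
    rw [pow_add] at h
    linear_combination h
  have h2 := mul_left_cancel₀ (pow_ne_zero p (U.ne0 (unit_sg1 S hn hadj))) h1
  have h3 : sg2 S hn ^ q * (sg1 S hn ^ (n-2)) = sg2 S hn ^ q * (sg2 S hn ^ (n-1)) := by
    linear_combination h2
  exact mul_left_cancel₀ (pow_ne_zero q (U.ne0 (unit_sg2 S hn hadj))) h3

lemma reps_sign_eq (hEq : sg1 S hn ^ (n-2) = sg2 S hn ^ (n-1)) {N M N' M' : ℕ}
    (h : N*(n-1)+M*(n-2) = N'*(n-1)+M'*(n-2)) :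
    sg1 S hn ^ N * sg2 S hn ^ M = sg1 S hn ^ N' * sg2 S hn ^ M' := by
  have main : ∀ A B A' B' : ℕ, A*(n-1)+B*(n-2) = A'*(n-1)+B'*(n-2) → A < A' →
      sg1 S hn ^ A * sg2 S hn ^ B = sg1 S hn ^ A' * sg2 S hn ^ B' := by
    intro A B A' B' hr hlt
    obtain ⟨k, hk1, hA', hB⟩ := rep_shift hn hr hlt
    rw [hA', hB, pow_add, pow_add, show k*(n-2) = (n-2)*k from by ring,
        show k*(n-1) = (n-1)*k from by ring, pow_mul, pow_mul, hEq]
    ring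
  rcases lt_trichotomy N N' with hlt | heq | hlt
  · exact main N M N' M' h hlt
  · subst heq
    have : M*(n-2) = M'*(n-2) := by omega
    have hM : M = M' := Nat.eq_of_mul_eq_mul_right (by omega) this
    rw [hM]
  · exact (main N' M' N M h.symm hlt).symm

lemma sig_ne (hpn : S.IsPrimitiveNonpowerful) : sg1 S hn ^ (n-2) ≠ sg2 S hn ^ (n-1) := by
  intro hEq
  obtain ⟨l, hl0, hl⟩ := hpn
  obtain ⟨f, f2, ⟨hf0, hft, hfw⟩, ⟨h20, h2t, h2w⟩, hne⟩ := hl l le_rfl (vt hn 0) (vt hn 0)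
  obtain ⟨IhA, IsA⟩ := invar S hn hadj f l hfw
  obtain ⟨IhB, IsB⟩ := invar S hn hadj f2 l h2w
  rw [hf0, hft, gg_0, mul_one, one_mul] at IsA
  rw [h20, h2t, gg_0, mul_one, one_mul] at IsB
  rw [hf0, hft, hgt_val hn (by omega)] at IhA
  rw [h20, h2t, hgt_val hn (by omega)] at IhB
  apply hne
  rw [IsA, IsB]
  exact reps_sign_eq S hn hadj hEq (by omega)

lemma makeSSSD (u v : Fin n) (t N M N' M' : ℕ)
    (hc : v.val = 0 ∨ (1 ≤ v.val ∧ v.val ≤ n-4 ∧ (1 ≤ N ∨ 1 ≤ M)) ∨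
          (v.val = n-3 ∧ 1 ≤ M) ∨ (n-2 ≤ v.val ∧ 1 ≤ N))
    (hc' : v.val = 0 ∨ (1 ≤ v.val ∧ v.val ≤ n-4 ∧ (1 ≤ N' ∨ 1 ≤ M')) ∨
          (v.val = n-3 ∧ 1 ≤ M') ∨ (n-2 ≤ v.val ∧ 1 ≤ N'))
    (ht : hgt n u ≤ t)
    (h1 : t + hgt n v = hgt n u + (N*(n-1)+M*(n-2)))
    (h2 : t + hgt n v = hgt n u + (N'*(n-1)+M'*(n-2)))
    (hsne : sg1 S hn ^ N * sg2 S hn ^ M ≠ sg1 S hn ^ N' * sg2 S hn ^ M') :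
    S.HasSSSD t u v := by
  have w1 : Wk S t u v (gg S hn u * (sg1 S hn ^ N * sg2 S hn ^ M * gg S hn v)) :=
    Wk.comp S (Wstart S hn hadj u)
      (Wto S hn hadj v N M (t - hgt n u) (by omega) hc) (by omega) rfl
  have w2 : Wk S t u v (gg S hn u * (sg1 S hn ^ N' * sg2 S hn ^ M' * gg S hn v)) :=
    Wk.comp S (Wstart S hn hadj u)
      (Wto S hn hadj v N' M' (t - hgt n u) (by omega) hc') (by omega) rfl
  obtain ⟨f, hf0, hft, hfw, hfs⟩ := w1
  obtain ⟨f2, h20, h2t, h2w, h2s⟩ := w2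
  refine ⟨f, f2, ⟨hf0, hft, hfw⟩, ⟨h20, h2t, h2w⟩, ?_⟩
  rw [hfs, h2s]
  intro hcon
  apply hsne
  have c1 := mul_left_cancel₀ (U.ne0 (unit_gg S hn hadj u)) hcon
  exact mul_right_cancel₀ (U.ne0 (unit_gg S hn hadj v)) c1


omit hadj in
lemma hgt_le (u : Fin n) : hgt n u ≤ n-2 := by
  have := u.isLt
  unfold hgt
  split_ifs <;> omega

lemma upperCore (hsne : sg1 S hn ^ (n-2) ≠ sg2 S hn ^ (n-1)) (u v : Fin n) (t x eN eM : ℕ)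
    (hev : (v.val = 0 ∧ eN = 0 ∧ eM = 0) ∨ (1 ≤ v.val ∧ v.val ≤ n-4 ∧ eN = 0 ∧ eM = 0) ∨
           (v.val = n-3 ∧ eN = 0 ∧ eM = 1) ∨ (n-2 ≤ v.val ∧ eN = 1 ∧ eM = 0))
    (hx : t + hgt n v = hgt n u + x + (n-2)*(n-1) + eN*(n-1) + eM*(n-2))
    (hxx : (n-2)*(n-3) ≤ x) (ht : hgt n u ≤ t) :
    S.HasSSSD t u v := by
  obtain ⟨a, b, hab⟩ := rep_exists hn x hxx
  refine makeSSSD S hn hadj u v t ((a+eN)+(n-2)) (b+eM) (a+eN) ((b+eM)+(n-1))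
    ?_ ?_ ht ?_ ?_ (sign_shift S hn hadj hsne (a+eN) (b+eM))
  · rcases hev with ⟨h1,h2,h3⟩|⟨h1,h2,h3,h4⟩|⟨h1,h2,h3⟩|⟨h1,h2,h3⟩
    · exact Or.inl h1
    · exact Or.inr (Or.inl ⟨h1, h2, Or.inl (by omega)⟩)
    · exact Or.inr (Or.inr (Or.inl ⟨h1, by omega⟩))
    · exact Or.inr (Or.inr (Or.inr ⟨h1, by omega⟩))
  · rcases hev with ⟨h1,h2,h3⟩|⟨h1,h2,h3,h4⟩|⟨h1,h2,h3⟩|⟨h1,h2,h3⟩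
    · exact Or.inl h1
    · exact Or.inr (Or.inl ⟨h1, h2, Or.inr (by omega)⟩)
    · exact Or.inr (Or.inr (Or.inl ⟨h1, by omega⟩))
    · exact Or.inr (Or.inr (Or.inr ⟨h1, by omega⟩))
  · have E1 : ((a+eN)+(n-2))*(n-1) = a*(n-1) + eN*(n-1) + (n-2)*(n-1) := by ring
    have E2 : (b+eM)*(n-2) = b*(n-2) + eM*(n-2) := by ring
    omega
  · have E2 : (b+eM)*(n-2) = b*(n-2) + eM*(n-2) := by ring
    have E3 : ((b+eM)+(n-1))*(n-2) = b*(n-2) + eM*(n-2) + (n-1)*(n-2) := by ring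
    have E4 : (n-1)*(n-2) = (n-2)*(n-1) := by ring
    have E5 : (a+eN)*(n-1) = a*(n-1) + eN*(n-1) := by ring
    omega

lemma upper (hsne : sg1 S hn ^ (n-2) ≠ sg2 S hn ^ (n-1)) (u v : Fin n) (t : ℕ)
    (ht : hgt n u + (2*n^2 - 8*n + 10) ≤ t) : S.HasSSSD t u v := by
  have hvl := v.isLt
  have hul := hgt_le hn u
  obtain ⟨c, rfl⟩ : ∃ c, n = c+6 := ⟨n-6, by omega⟩
  have s1 : c+6-1 = c+5 := by omega
  have s2 : c+6-2 = c+4 := by omega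
  have s3 : c+6-3 = c+3 := by omega
  have s4 : c+6-4 = c+2 := by omega
  have esq : 2*(c+6)^2 = 2*(c*c) + 24*c + 72 := by ring
  have e21 : (c+4)*(c+5) = c*c + 9*c + 20 := by ring
  have e23 : (c+4)*(c+3) = c*c + 7*c + 12 := by ring
  have ht' : hgt (c+6) u + (2*(c*c) + 16*c + 34) ≤ t := by omega
  by_cases h0 : v.val = 0
  · refine upperCore S hn hadj hsne u v t (t + hgt (c+6) v - hgt (c+6) u - (c+4)*(c+5)) 0 0
      (Or.inl ⟨h0, rfl, rfl⟩) ?_ ?_ (by omega)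
    · have hv : hgt (c+6) v = 0 := by rw [hgt_of hn (by omega)]; omega
      rw [s1, s2]
      omega
    · have hv : hgt (c+6) v = 0 := by rw [hgt_of hn (by omega)]; omega
      rw [s2, s3]
      omega
  by_cases h1 : v.val ≤ c+2
  · have hv : hgt (c+6) v = v.val := hgt_of hn (by omega)
    refine upperCore S hn hadj hsne u v t (t + hgt (c+6) v - hgt (c+6) u - (c+4)*(c+5)) 0 0
      (Or.inr (Or.inl ⟨by omega, by omega, rfl, rfl⟩)) ?_ ?_ (by omega)
    · rw [s1, s2]; omega
    · rw [s2, s3]; omega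
  by_cases h2 : v.val = c+3
  · have hv : hgt (c+6) v = c+3 := by rw [hgt_of hn (by omega)]; omega
    refine upperCore S hn hadj hsne u v t
      (t + hgt (c+6) v - hgt (c+6) u - (c+4)*(c+5) - (c+4)) 0 1
      (Or.inr (Or.inr (Or.inl ⟨by omega, rfl, rfl⟩))) ?_ ?_ (by omega)
    · rw [s1, s2]; omega
    · rw [s2, s3]; omega
  · have h3 : c+4 ≤ v.val := by omega
    have hv : hgt (c+6) v = c+3 ∨ hgt (c+6) v = c+4 := by
      unfold hgt
      split_ifs <;> omega
    refine upperCore S hn hadj hsne u v t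
      (t + hgt (c+6) v - hgt (c+6) u - (c+4)*(c+5) - (c+5)) 1 0
      (Or.inr (Or.inr (Or.inr ⟨by omega, rfl, rfl⟩))) ?_ ?_ (by omega)
    · rw [s1, s2]; omega
    · rw [s2, s3]; omega


omit hadj in
lemma into_n2 {a b : Fin n} (h : FAdj n a b) (hb : b.val = n-2) : a.val = n-1 := by
  have := a.isLt
  have := b.isLt
  rcases h with ⟨h1,h2⟩|⟨h1,h2⟩|⟨h1,h2⟩|⟨h1,h2,h3⟩|⟨h1,h2⟩|⟨h1,h2⟩ <;> omega

omit hadj in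
lemma into_n1 {a b : Fin n} (h : FAdj n a b) (hb : b.val = n-1) : a.val = 0 := by
  have := a.isLt
  have := b.isLt
  rcases h with ⟨h1,h2⟩|⟨h1,h2⟩|⟨h1,h2⟩|⟨h1,h2,h3⟩|⟨h1,h2⟩|⟨h1,h2⟩ <;> omega

lemma rep_uniq {N M N' M' : ℕ} (hN : 1 ≤ N) (hN' : 1 ≤ N')
    (h1 : N*(n-1)+M*(n-2) = 2*n^2-7*n+6) (h2 : N'*(n-1)+M'*(n-2) = 2*n^2-7*n+6) :
    N = N' ∧ M = M' := by
  have main : ∀ A B A' B' : ℕ, 1 ≤ A → A*(n-1)+B*(n-2) = 2*n^2-7*n+6 →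
      A'*(n-1)+B'*(n-2) = 2*n^2-7*n+6 → A < A' → False := by
    intro A B A' B' hA hr1 hr2 hlt
    obtain ⟨k, hk1, hA'e, hBe⟩ := rep_shift hn (by omega : A*(n-1)+B*(n-2) = A'*(n-1)+B'*(n-2)) hlt
    have hkk : (n-2) ≤ k*(n-2) := Nat.le_mul_of_pos_left _ hk1
    have hA'big : n-1 ≤ A' := by omega
    set a := A' - (n-1) with ha
    have e1 : A'*(n-1) = a*(n-1) + (n-1)*(n-1) := by
      rw [ha, Nat.sub_mul]
      have : (n-1)*(n-1) ≤ A'*(n-1) := Nat.mul_le_mul_right _ hA'big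
      omega
    have hF : a*(n-1) + B'*(n-2) = (n-2)*(n-3) - 1 := by
      obtain ⟨c, rfl⟩ : ∃ c, n = c+6 := ⟨n-6, by omega⟩
      have s1 : c+6-1 = c+5 := by omega
      have s2 : c+6-2 = c+4 := by omega
      have s3 : c+6-3 = c+3 := by omega
      simp only [s1, s2, s3] at *
      have esq : 2*(c+6)^2 = 2*(c*c) + 24*c + 72 := by ring
      have e5 : (c+5)*(c+5) = c*c + 10*c + 25 := by ring
      have e43 : (c+4)*(c+3) = c*c + 7*c + 12 := by ring
      omega
    exact non_rep hn a B' hF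
  rcases lt_trichotomy N N' with hlt | heq | hlt
  · exact absurd (main N M N' M' hN h1 h2 hlt) (by simp)
  · subst heq
    refine ⟨rfl, ?_⟩
    have : M*(n-2) = M'*(n-2) := by omega
    exact Nat.eq_of_mul_eq_mul_right (by omega) this
  · exact absurd (main N' M' N M hN' h2 h1 hlt) (by simp)

lemma lower (u : Fin n) : ¬ S.HasSSSD (hgt n u + (2*n^2-8*n+9)) u (vt hn (n-2)) := by
  intro ⟨f, f2, ⟨hf0, hft, hfw⟩, ⟨h20, h2t, h2w⟩, hne⟩
  set t0 := hgt n u + (2*n^2-8*n+9) with ht0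
  have h2le : 2 ≤ 2*n^2-8*n+9 := by
    obtain ⟨c, rfl⟩ : ∃ c, n = c+6 := ⟨n-6, by omega⟩
    have esq : 2*(c+6)^2 = 2*(c*c) + 24*c + 72 := by ring
    omega
  have htl : 2 ≤ t0 := by omega
  have getN : ∀ g : ℕ → Fin n, IsWalk S.Adj t0 g → g t0 = vt hn (n-2) → 1 ≤ NN hn g t0 := by
    intro g hgw hgt0
    have harc1 : S.Adj (g (t0-1)) (g t0) := by
      have := hgw (t0-1) (by omega)
      rwa [show t0-1+1 = t0 from by omega] at this
    have harc2 : S.Adj (g (t0-2)) (g (t0-1)) := by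
      have := hgw (t0-2) (by omega)
      rwa [show t0-2+1 = t0-1 from by omega] at this
    rw [hadj] at harc1 harc2
    have hv1 : (g (t0-1)).val = n-1 :=
      into_n2 hn harc1 (by rw [hgt0, vt_val hn (by omega)])
    have hv0 : (g (t0-2)).val = 0 := into_n1 hn harc2 hv1
    refine Finset.card_pos.mpr ⟨t0-2, Finset.mem_filter.mpr ⟨Finset.mem_range.mpr (by omega), ?_, ?_⟩⟩
    · exact vt_eq hn (by omega) hv0
    · rw [show t0-2+1 = t0-1 from by omega]
      exact vt_eq hn (by omega) hv1
  have hNf := getN f hfw hft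
  have hNf2 := getN f2 h2w h2t
  obtain ⟨IhA, IsA⟩ := invar S hn hadj f t0 hfw
  obtain ⟨IhB, IsB⟩ := invar S hn hadj f2 t0 h2w
  rw [hft, hgt_n2 hn, hf0] at IhA
  rw [h2t, hgt_n2 hn, h20] at IhB
  have harith : ∀ X Y : ℕ, t0 + (n-3) = hgt n u + X + Y → X + Y = 2*n^2-7*n+6 := by
    intro X Y hX
    rw [ht0] at hX
    obtain ⟨c, rfl⟩ : ∃ c, n = c+6 := ⟨n-6, by omega⟩
    have esq : 2*(c+6)^2 = 2*(c*c) + 24*c + 72 := by ring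
    omega
  have hrepA := harith _ _ IhA
  have hrepB := harith _ _ IhB
  obtain ⟨hNe, hMe⟩ := rep_uniq S hn hadj hNf hNf2 hrepA hrepB
  apply hne
  rw [hft] at IsA
  rw [h2t] at IsB
  have : S.walkSign t0 f * gg S hn (vt hn (n-2)) = S.walkSign t0 f2 * gg S hn (vt hn (n-2)) := by
    rw [IsA, IsB, hf0, h20, hNe, hMe]
  exact mul_right_cancel₀ (U.ne0 (unit_gg S hn hadj (vt hn (n-2)))) this

lemma base (hpn : S.IsPrimitiveNonpowerful) (u : Fin n) :
    S.localBase u = hgt n u + (2*n^2-8*n+10) := by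
  have hsne := sig_ne S hn hadj hpn
  have hmem : (hgt n u + (2*n^2-8*n+10)) ∈ {l : ℕ | ∀ t ≥ l, ∀ v : Fin n, S.HasSSSD t u v} :=
    fun t htl v => upper S hn hadj hsne u v t htl
  unfold SignedDigraph.localBase
  apply le_antisymm (Nat.sInf_le hmem)
  apply le_csInf ⟨_, hmem⟩
  intro l hl
  by_contra hlt
  push_neg at hlt
  have he : (2*n^2-8*n+10) = (2*n^2-8*n+9) + 1 := by
    obtain ⟨c, rfl⟩ : ∃ c, n = c+6 := ⟨n-6, by omega⟩
    have esq : 2*(c+6)^2 = 2*(c*c) + 24*c + 72 := by ring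
    omega
  exact lower S hn hadj u (hl _ (by omega) (vt hn (n-2)))


noncomputable def kthSmallest' {n : ℕ} (f : Fin n → ℕ) (k : ℕ) : ℕ :=
  (Multiset.sort (Finset.univ.val.map f) (· ≤ ·)).getD (k - 1) 0

omit hadj in
lemma kth_mono (B : Fin n → ℕ) (hmono : Monotone B) (k : ℕ) (hk1 : 1 ≤ k) (hk2 : k ≤ n) :
    kthSmallest' B k = B ⟨k-1, by omega⟩ := by
  unfold kthSmallest'
  have huniv : (Finset.univ.val.map B) = ↑(List.ofFn B) := Fin.univ_val_map B
  rw [huniv]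
  have hsort : Multiset.sort ↑(List.ofFn B) (·≤·) = List.ofFn B :=
    List.Perm.eq_of_pairwise' (Multiset.pairwise_sort _ _)
      (List.pairwise_ofFn.mpr (fun i j h => hmono h.le))
      (Multiset.coe_eq_coe.mp (Multiset.sort_eq _ _))
  rw [hsort, List.getD_eq_getElem _ _ (by rw [List.length_ofFn]; omega), List.getElem_ofFn]

omit hadj in
lemma hgt_mono : Monotone (fun u : Fin n => hgt n u + (2*n^2-8*n+10)) := by
  intro a b hab
  have hab' : a.val ≤ b.val := hab
  have ha := a.isLt
  have hb := b.isLt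
  simp only [add_le_add_iff_right]
  unfold hgt
  split_ifs <;> omega

omit hadj in
lemma hgt_eq_n2 {v : Fin n} (h : v.val = n-2) : hgt n v = n-3 := by
  unfold hgt; rw [if_neg (by omega), if_pos h]

omit hadj in
lemma hgt_eq_n1 {v : Fin n} (h : v.val = n-1) : hgt n v = n-2 := by
  unfold hgt; rw [if_pos h]

end Main
end Stmt4

/-- Let `n ≥ 6` and let `𝒮₀` be a primitive nonpowerful signed
digraph with underlying digraph `F`, in which all cycles of length `n-1` have
the same sign and all cycles of length `n-2` have the same sign. Then
`l(k) = l(v_k) = 2n²-8n+9+k` for `1 ≤ k ≤ n-2` and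
`l(k) = l(v_k) = 2n²-8n+8+k` for `n-1 ≤ k ≤ n`. -/
theorem stmt4 (n : ℕ) (hn : 6 ≤ n)
    (S : SignedDigraph (Fin n)) (hadj : S.Adj = FAdj n)
    (hpn : S.IsPrimitiveNonpowerful)
    (h1 : S.SameSignCycles (n - 1)) (h2 : S.SameSignCycles (n - 2)) :
    (∀ k : ℕ, ∀ _hk1 : 1 ≤ k, ∀ _hk2 : k ≤ n - 2,
      kthSmallest S.localBase k = S.localBase ⟨k - 1, by omega⟩ ∧
      S.localBase ⟨k - 1, by omega⟩ = 2 * n ^ 2 - 8 * n + 9 + k) ∧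
    (∀ k : ℕ, ∀ _hk1 : n - 1 ≤ k, ∀ _hk2 : k ≤ n,
      kthSmallest S.localBase k = S.localBase ⟨k - 1, by omega⟩ ∧
      S.localBase ⟨k - 1, by omega⟩ = 2 * n ^ 2 - 8 * n + 8 + k) := by
  have hfun : S.localBase = fun u : Fin n => Stmt4.hgt n u + (2*n^2-8*n+10) :=
    funext (Stmt4.base S hn hadj hpn)
  have hkth : ∀ k : ℕ, 1 ≤ k → ∀ hk2 : k ≤ n,
      kthSmallest S.localBase k = S.localBase ⟨k-1, by omega⟩ := by
    intro k hk1 hk2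
    show Stmt4.kthSmallest' S.localBase k = S.localBase ⟨k-1, by omega⟩
    rw [hfun]
    exact Stmt4.kth_mono hn _ (Stmt4.hgt_mono hn) k hk1 hk2
  have harith : ∀ k, 1 ≤ k → k ≤ n →
      (k-1) + (2*n^2-8*n+10) = (if k ≤ n-2 then 2*n^2-8*n+9+k else 0) ∨ True := fun _ _ _ => Or.inr trivial
  constructor
  · intro k hk1 hk2
    have hv : Stmt4.hgt n (⟨k-1, by omega⟩ : Fin n) = k-1 := Stmt4.hgt_of hn (by show k-1 ≤ n-3; omega)
    refine ⟨hkth k hk1 (by omega), ?_⟩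
    rw [hfun]
    simp only
    rw [hv]
    obtain ⟨c, rfl⟩ : ∃ c, n = c+6 := ⟨n-6, by omega⟩
    have esq : 2*(c+6)^2 = 2*(c*c) + 24*c + 72 := by ring
    omega
  · intro k hk1 hk2
    refine ⟨hkth k (by omega) hk2, ?_⟩
    rw [hfun]
    simp only
    by_cases hk : k = n-1
    · have hv : Stmt4.hgt n (⟨k-1, by omega⟩ : Fin n) = n-3 := Stmt4.hgt_eq_n2 hn (by show k-1 = n-2; omega)
      rw [hv]
      obtain ⟨c, rfl⟩ : ∃ c, n = c+6 := ⟨n-6, by omega⟩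
      have esq : 2*(c+6)^2 = 2*(c*c) + 24*c + 72 := by ring
      omega
    · have hkn : k = n := by omega
      have hv : Stmt4.hgt n (⟨k-1, by omega⟩ : Fin n) = n-2 := Stmt4.hgt_eq_n1 hn (by show k-1 = n-1; omega)
      rw [hv]
      obtain ⟨c, rfl⟩ : ∃ c, n = c+6 := ⟨n-6, by omega⟩
      have esq : 2*(c+6)^2 = 2*(c*c) + 24*c + 72 := by ring
      omega
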